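/- Hutchinson's theorem: if a real polynomial ∑_{i=0}^k a_i x^i has all coefficients a_i positive and satisfies a_i^2 > 4 a_{i-1} a_{i+1} for all i = 1, …, k-1, then all its roots are real and negative. -/

import Mathlib

open Polynomial

open Finset

/-- Alternating sum of a nonneg decreasing sequence lies in `[0, c 0]`. -/
lemma hutch_alt_sum_bound : ∀ (M : ℕ) (c : ℕ → ℝ), (∀ m, 0 ≤ c m) →
    (∀ m, m + 1 ≤ M → c (m + 1) ≤ c m) →
    0 ≤ ∑ m ∈ range (M + 1), (-1 : ℝ) ^ m * c m ∧
      ∑ m ∈ range (M + 1), (-1 : ℝ) ^ m * c m ≤ c 0 := by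
  intro M
  induction M with
  | zero => intro c h0 _; simpa using h0 0
  | succ M ih =>
    intro c h0 hdec
    have key : ∑ m ∈ range (M + 2), (-1 : ℝ) ^ m * c m
        = c 0 - ∑ m ∈ range (M + 1), (-1 : ℝ) ^ m * c (m + 1) := by
      rw [Finset.sum_range_succ' (fun m => (-1 : ℝ) ^ m * c m) (M + 1)]
      rw [eq_sub_iff_add_eq, add_assoc]
      have : ∑ k ∈ range (M + 1), (-1 : ℝ) ^ (k + 1) * c (k + 1)
          = - ∑ m ∈ range (M + 1), (-1 : ℝ) ^ m * c (m + 1) := by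
        rw [← Finset.sum_neg_distrib]
        exact Finset.sum_congr rfl fun m _ => by ring
      rw [this]; simp
    obtain ⟨h1, h2⟩ := ih (fun m => c (m + 1)) (fun m => h0 (m + 1))
      (fun m hm => hdec (m + 1) (by omega))
    have hc10 : c 1 ≤ c 0 := hdec 0 (by omega)
    constructor
    · rw [key]; linarith
    · rw [key]; linarith

/-- Alternating sum of a nonneg increasing sequence: `0 ≤ (-1)^i ∑ ≤ c i`. -/
lemma hutch_alt_sum_inc (i : ℕ) (c : ℕ → ℝ) (h0 : ∀ m, 0 ≤ c m)
    (hinc : ∀ m, m + 1 ≤ i → c m ≤ c (m + 1)) :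
    0 ≤ (-1 : ℝ) ^ i * ∑ j ∈ range (i + 1), (-1 : ℝ) ^ j * c j ∧
      (-1 : ℝ) ^ i * ∑ j ∈ range (i + 1), (-1 : ℝ) ^ j * c j ≤ c i := by
  have hrefl : ∑ j ∈ range (i + 1), (-1 : ℝ) ^ (i - j) * c (i - j)
      = ∑ j ∈ range (i + 1), (-1 : ℝ) ^ j * c j := by
    have := Finset.sum_range_reflect (fun j => (-1 : ℝ) ^ j * c j) (i + 1)
    simpa using this
  have hmul : (-1 : ℝ) ^ i * ∑ j ∈ range (i + 1), (-1 : ℝ) ^ j * c j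
      = ∑ j ∈ range (i + 1), (-1 : ℝ) ^ j * c (i - j) := by
    rw [← hrefl, Finset.mul_sum]
    refine Finset.sum_congr rfl fun j hj => ?_
    have h019 : j ≤ i := by simpa [Nat.lt_succ_iff] using Finset.mem_range.mp hj
    have : (-1 : ℝ) ^ i = (-1 : ℝ) ^ (i - j) * (-1 : ℝ) ^ j := by
      rw [← pow_add]; congr 1; omega
    rw [this]
    have hsq : ((-1 : ℝ) ^ (i - j)) * ((-1 : ℝ) ^ (i - j)) = 1 := by
      rcases Nat.even_or_odd (i - j) with h | h
      · rw [h.neg_one_pow]; norm_num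
      · rw [h.neg_one_pow]; norm_num
    calc ((-1 : ℝ) ^ (i - j) * (-1) ^ j) * ((-1) ^ (i - j) * c (i - j))
        = ((-1 : ℝ) ^ (i - j) * (-1) ^ (i - j)) * ((-1) ^ j * c (i - j)) := by ring
      _ = (-1 : ℝ) ^ j * c (i - j) := by rw [hsq, one_mul]
  rw [hmul]
  obtain ⟨h1, h2⟩ := hutch_alt_sum_bound i (fun j => c (i - j)) (fun m => h0 _)
    (fun m hm => by
      have heq : i - (m + 1) + 1 = i - m := by omega
      show c (i - (m + 1)) ≤ c (i - m)
      rw [← heq]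
      exact hinc _ (by omega))
  exact ⟨h1, by simpa using h2⟩

/-- Alternating tail sum, decreasing from `s`: `0 ≤ (-1)^s ∑_{j=s}^{e} ≤ c s`. -/
lemma hutch_alt_sum_tail (s e : ℕ) (hse : s ≤ e) (c : ℕ → ℝ) (h0 : ∀ m, 0 ≤ c m)
    (hdec : ∀ m, s ≤ m → m + 1 ≤ e → c (m + 1) ≤ c m) :
    0 ≤ (-1 : ℝ) ^ s * ∑ j ∈ Finset.Ico s (e + 1), (-1 : ℝ) ^ j * c j ∧
      (-1 : ℝ) ^ s * ∑ j ∈ Finset.Ico s (e + 1), (-1 : ℝ) ^ j * c j ≤ c s := by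
  have hre : ∑ j ∈ Finset.Ico s (e + 1), (-1 : ℝ) ^ j * c j
      = ∑ m ∈ range (e - s + 1), (-1 : ℝ) ^ (s + m) * c (s + m) := by
    rw [Finset.sum_Ico_eq_sum_range]
    have : e + 1 - s = e - s + 1 := by omega
    rw [this]
  have hmul : (-1 : ℝ) ^ s * ∑ j ∈ Finset.Ico s (e + 1), (-1 : ℝ) ^ j * c j
      = ∑ m ∈ range (e - s + 1), (-1 : ℝ) ^ m * c (s + m) := by
    rw [hre, Finset.mul_sum]
    refine Finset.sum_congr rfl fun m _ => ?_
    rw [pow_add]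
    have hsq : ((-1 : ℝ) ^ s) * ((-1 : ℝ) ^ s) = 1 := by
      rcases Nat.even_or_odd s with h | h
      · rw [h.neg_one_pow]; norm_num
      · rw [h.neg_one_pow]; norm_num
    calc (-1 : ℝ) ^ s * ((-1) ^ s * (-1) ^ m * c (s + m))
        = ((-1 : ℝ) ^ s * (-1) ^ s) * ((-1) ^ m * c (s + m)) := by ring
      _ = (-1 : ℝ) ^ m * c (s + m) := by rw [hsq, one_mul]
  rw [hmul]
  obtain ⟨h1, h2⟩ := hutch_alt_sum_bound (e - s) (fun m => c (s + m)) (fun m => h0 _)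
    (fun m hm => by
      have h' := hdec (s + m) (by omega) (by omega)
      simpa [Nat.add_assoc] using h')
  exact ⟨h1, by simpa using h2⟩

lemma hutch_exists_root {f : ℝ → ℝ} (hf : Continuous f) {x y : ℝ} (hxy : x < y)
    (h : f x * f y < 0) : ∃ z ∈ Set.Ioo x y, f z = 0 := by
  rcases lt_or_ge (f x) 0 with h1 | h1
  · have h2 : 0 < f y := by nlinarith
    obtain ⟨z, hz, hz0⟩ := intermediate_value_Ioo hxy.le hf.continuousOn
      (Set.mem_Ioo.mpr ⟨h1, h2⟩)
    exact ⟨z, hz, hz0⟩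
  · have h2 : f y < 0 := by nlinarith
    have h1' : 0 < f x := by nlinarith
    obtain ⟨z, hz, hz0⟩ := intermediate_value_Ioo' hxy.le hf.continuousOn
      (Set.mem_Ioo.mpr ⟨h2, h1'⟩)
    exact ⟨z, hz, hz0⟩

set_option maxHeartbeats 3200000 in
/-- Hutchinson's theorem: if a real polynomial `∑_{i=0}^k a_i x^i` has all coefficients
positive and satisfies `a_i ^ 2 > 4 * a_{i-1} * a_{i+1}` for `i = 1, …, k-1`, then all of
its (complex) roots are real and negative. -/
theorem hutchinson_roots_real_neg (P : Polynomial ℝ) (k : ℕ) (hk : 1 ≤ k)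
    (hdeg : P.natDegree = k) (hpos : ∀ i ≤ k, 0 < P.coeff i)
    (hcond : ∀ i, 1 ≤ i → i ≤ k - 1 →
      P.coeff i ^ 2 > 4 * P.coeff (i - 1) * P.coeff (i + 1)) :
    ∀ z : ℂ, (P.map (algebraMap ℝ ℂ)).IsRoot z → z.im = 0 ∧ z.re < 0 := by
  classical
  have ha0 : ∀ i, 0 ≤ P.coeff i := by
    intro i
    rcases le_or_gt i k with h | h
    · exact (hpos i h).le
    · have : P.coeff i = 0 := Polynomial.coeff_eq_zero_of_natDegree_lt (by omega)
      simp [this]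
  have hacoeff_hi : ∀ i, k < i → P.coeff i = 0 := fun i h =>
    Polynomial.coeff_eq_zero_of_natDegree_lt (by omega)
  set b : ℕ → ℝ := fun i => P.coeff (i - 1) / P.coeff i with hb_def
  have hbpos : ∀ i, 1 ≤ i → i ≤ k → 0 < b i := fun i h1 h2 =>
    div_pos (hpos _ (by omega)) (hpos _ h2)
  have hb_eq : ∀ i, 1 ≤ i → i ≤ k → P.coeff (i - 1) = b i * P.coeff i := by
    intro i h1 h2
    simp only [hb_def]
    rw [div_mul_cancel₀ _ (ne_of_gt (hpos i h2))]
  have hb4 : ∀ i, 1 ≤ i → i + 1 ≤ k → 4 * b i < b (i + 1) := by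
    intro i h1 h2
    have hc := hcond i h1 (by omega)
    have hai := hpos i (by omega)
    have hai1 := hpos (i + 1) h2
    have haim := hpos (i - 1) (by omega)
    simp only [hb_def, Nat.add_sub_cancel]
    rw [mul_div_assoc', div_lt_div_iff₀ hai hai1]
    nlinarith [hc]
  have hb_le : ∀ j i, 1 ≤ i → i ≤ j → j ≤ k → b i ≤ b j := by
    intro j
    induction j with
    | zero => intro i h1 h2 _; omega
    | succ n ih =>
      intro i h1 h2 h3
      rcases eq_or_lt_of_le h2 with h | h
      · rw [h]
      · have hi_n : i ≤ n := by omega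
        have hn1 : 1 ≤ n := by omega
        have h4 := hb4 n hn1 h3
        have hbn := hbpos n hn1 (by omega)
        have := ih i h1 hi_n (by omega)
        linarith
  set t : ℕ → ℝ := fun i =>
    if i = 0 then 0 else if i = k then 2 * b k else Real.sqrt (b i * b (i + 1))
    with ht_def
  have ht0 : t 0 = 0 := by simp [ht_def]
  have htpos : ∀ i, 1 ≤ i → i ≤ k → 0 < t i := by
    intro i h1 h2
    simp only [ht_def]
    rw [if_neg (by omega)]
    by_cases hik : i = k
    · rw [if_pos hik]
      have := hbpos k hk le_rfl
      linarith
    · rw [if_neg hik]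
      exact Real.sqrt_pos.mpr (mul_pos (hbpos i h1 h2) (hbpos (i + 1) (by omega) (by omega)))
  have htnn : ∀ i, i ≤ k → 0 ≤ t i := by
    intro i h
    rcases Nat.eq_zero_or_pos i with rfl | h1
    · rw [ht0]
    · exact (htpos i h1 h).le
  have htlt : ∀ i, i < k → t i < t (i + 1) := by
    intro i hik
    rcases Nat.eq_zero_or_pos i with rfl | h1
    · rw [ht0]; exact htpos 1 le_rfl (by omega)
    · have hti : t i = Real.sqrt (b i * b (i + 1)) := by
        simp only [ht_def]; rw [if_neg (by omega), if_neg (by omega)]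
      by_cases hik1 : i + 1 = k
      · have hti1 : t (i + 1) = 2 * b k := by
          simp only [ht_def]; rw [if_neg (by omega), if_pos hik1]
        rw [hti, hti1, ← hik1]
        have hb1 := hbpos i h1 (by omega)
        have hb2 := hbpos (i + 1) (by omega) (by omega)
        have hle := hb_le (i + 1) i h1 (by omega) (by omega)
        rw [Real.sqrt_lt' (by linarith)]
        nlinarith
      · have hti1 : t (i + 1) = Real.sqrt (b (i + 1) * b (i + 2)) := by
          simp only [ht_def]; rw [if_neg (by omega), if_neg (by omega)]
        rw [hti, hti1]
        apply Real.sqrt_lt_sqrt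
        · exact (mul_pos (hbpos i h1 (by omega)) (hbpos (i + 1) (by omega) (by omega))).le
        · have hb1 := hbpos i h1 (by omega)
          have hb2 := hbpos (i + 1) (by omega) (by omega)
          have hb3 := hbpos (i + 2) (by omega) (by omega)
          have h4 := hb4 (i + 1) (by omega) (by omega)
          have hle := hb_le (i + 1) i h1 (by omega) (by omega)
          nlinarith
  have htle : ∀ j i, i ≤ j → j ≤ k → t i ≤ t j := by
    intro j
    induction j with
    | zero =>
      intro i h1 _
      have : i = 0 := by omega
      rw [this]
    | succ n ih =>
      intro i h1 h2
      rcases eq_or_lt_of_le h1 with h | h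
      · rw [h]
      · exact (ih i (by omega) (by omega)).trans (htlt n (by omega)).le
  -- the key sign lemma
  have hsign : ∀ i, i ≤ k → 0 < (-1 : ℝ) ^ i * P.eval (-(t i)) := by
    intro i hik
    rcases Nat.eq_zero_or_pos i with rfl | hi1
    · rw [ht0]
      simpa [← Polynomial.coeff_zero_eq_eval_zero] using hpos 0 (by omega)
    · obtain ⟨m, rfl⟩ : ∃ m, i = m + 1 := ⟨i - 1, by omega⟩
      set tt : ℝ := t (m + 1) with htt_def
      have htt : 0 < tt := htpos (m + 1) hi1 hik
      set c : ℕ → ℝ := fun j => P.coeff j * tt ^ j with hc_def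
      have hc0 : ∀ j, 0 ≤ c j := fun j => mul_nonneg (ha0 j) (pow_nonneg htt.le j)
      have hcpos : ∀ j, j ≤ k → 0 < c j := fun j hj =>
        mul_pos (hpos j hj) (pow_pos htt j)
      -- tt is at least b (m+1)
      have hb_le_tt : b (m + 1) ≤ tt := by
        by_cases hmk : m + 1 = k
        · have : tt = 2 * b k := by
            simp only [htt_def, ht_def]; rw [if_neg (by omega), if_pos hmk]
          rw [this, ← hmk]
          have := hbpos (m + 1) hi1 hik
          linarith
        · have httq : tt = Real.sqrt (b (m + 1) * b (m + 2)) := by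
            simp only [htt_def, ht_def]; rw [if_neg (by omega), if_neg hmk]
          have hb1 := hbpos (m + 1) hi1 hik
          have hb2 := hbpos (m + 2) (by omega) (by omega)
          have h4 := hb4 (m + 1) hi1 (by omega)
          rw [httq, Real.le_sqrt hb1.le (by positivity)]
          nlinarith
      have hub : ∀ j, j + 1 ≤ m + 1 → b (j + 1) ≤ tt := fun j hj =>
        (hb_le (m + 1) (j + 1) (by omega) hj hik).trans hb_le_tt
      -- c increasing up to m+1
      have hcinc : ∀ j, j + 1 ≤ m + 1 → c j ≤ c (j + 1) := by
        intro j hj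
        have hcoef : P.coeff j = b (j + 1) * P.coeff (j + 1) := by
          have := hb_eq (j + 1) (by omega) (by omega)
          simpa using this
        have hpows : (0 : ℝ) < tt ^ j := pow_pos htt j
        have haj1 := hpos (j + 1) (by omega)
        simp only [hc_def, hcoef, pow_succ]
        nlinarith [mul_le_mul_of_nonneg_right (hub j hj) (mul_nonneg haj1.le hpows.le)]
      -- lower bound on the head sum
      have hA : c (m + 1) - c m ≤
          (-1 : ℝ) ^ (m + 1) * ∑ j ∈ Finset.range (m + 2), (-1 : ℝ) ^ j * c j := by
        rw [Finset.sum_range_succ]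
        have hincm := (hutch_alt_sum_inc m c hc0 (fun j hj => hcinc j (by omega))).2
        have husq : ((-1 : ℝ) ^ m) * ((-1 : ℝ) ^ m) = 1 := by
          rcases Nat.even_or_odd m with h | h
          · rw [h.neg_one_pow]; norm_num
          · rw [h.neg_one_pow]; norm_num
        have hexp : (-1 : ℝ) ^ (m + 1) *
              ((∑ j ∈ Finset.range (m + 1), (-1 : ℝ) ^ j * c j) + (-1 : ℝ) ^ (m + 1) * c (m + 1))
            = -((-1 : ℝ) ^ m * ∑ j ∈ Finset.range (m + 1), (-1 : ℝ) ^ j * c j)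
              + ((-1 : ℝ) ^ m * (-1 : ℝ) ^ m) * c (m + 1) := by
          rw [pow_succ]; ring
        rw [hexp, husq, one_mul]
        linarith
      -- bound on the tail sum
      have hB : -(c (m + 2)) ≤
          (-1 : ℝ) ^ (m + 1) * ∑ j ∈ Finset.Ico (m + 2) (k + 1), (-1 : ℝ) ^ j * c j := by
        by_cases hmk : m + 1 = k
        · have hemp : Finset.Ico (m + 2) (k + 1) = ∅ :=
            Finset.Ico_eq_empty (by omega)
          rw [hemp, Finset.sum_empty, mul_zero]
          linarith [hc0 (m + 2)]
        · have hmk' : m + 2 ≤ k := by omega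
          have httq : tt = Real.sqrt (b (m + 1) * b (m + 2)) := by
            simp only [htt_def, ht_def]; rw [if_neg (by omega), if_neg hmk]
          have htt_le : ∀ j, m + 2 ≤ j → j ≤ k → tt ≤ b j := by
            intro j hj1 hj2
            have hb1 := hbpos (m + 1) hi1 (by omega)
            have hb2 := hbpos (m + 2) (by omega) hmk'
            have hle : tt ≤ b (m + 2) := by
              rw [httq]
              have : b (m + 1) * b (m + 2) ≤ b (m + 2) ^ 2 := by
                have h4 := hb4 (m + 1) hi1 hmk'
                nlinarith [mul_le_mul_of_nonneg_right
                  (show b (m + 1) ≤ b (m + 2) by linarith) hb2.le]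
              calc Real.sqrt (b (m + 1) * b (m + 2)) ≤ Real.sqrt (b (m + 2) ^ 2) :=
                    Real.sqrt_le_sqrt this
                _ = b (m + 2) := Real.sqrt_sq hb2.le
            exact hle.trans (hb_le j (m + 2) (by omega) hj1 hj2)
          have hcdec : ∀ j, m + 2 ≤ j → j + 1 ≤ k → c (j + 1) ≤ c j := by
            intro j hj1 hj2
            have hcoef : P.coeff j = b (j + 1) * P.coeff (j + 1) := by
              have := hb_eq (j + 1) (by omega) (by omega)
              simpa using this
            have hpows : (0 : ℝ) < tt ^ j := pow_pos htt j
            have haj1 := hpos (j + 1) (by omega)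
            have hth := htt_le (j + 1) (by omega) hj2
            simp only [hc_def, hcoef, pow_succ]
            nlinarith [mul_le_mul_of_nonneg_right hth (mul_nonneg haj1.le hpows.le)]
          have htail := hutch_alt_sum_tail (m + 2) k hmk' c hc0 hcdec
          have husq : ((-1 : ℝ) ^ (m + 1)) * ((-1 : ℝ) ^ (m + 1)) = 1 := by
            rcases Nat.even_or_odd (m + 1) with h | h
            · rw [h.neg_one_pow]; norm_num
            · rw [h.neg_one_pow]; norm_num
          have h2 := htail.2
          have hexp : (-1 : ℝ) ^ (m + 2) = -((-1 : ℝ) ^ (m + 1)) := by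
            rw [pow_succ]; ring
          rw [hexp] at h2
          linarith
      -- the gap inequality
      have hgap : c m + c (m + 2) < c (m + 1) := by
        by_cases hmk : m + 1 = k
        · have httq : tt = 2 * b (m + 1) := by
            simp only [htt_def, ht_def]; rw [if_neg (by omega), if_pos hmk, hmk]
          have hc2 : c (m + 2) = 0 := by
            simp only [hc_def]
            rw [hacoeff_hi (m + 2) (by omega)]
            ring
          have hcoef : P.coeff m = b (m + 1) * P.coeff (m + 1) := by
            have := hb_eq (m + 1) (by omega) (by omega)
            simpa using this
          have hcm : 0 < c m := hcpos m (by omega)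
          have : c (m + 1) = 2 * c m := by
            simp only [hc_def, hcoef, pow_succ]
            rw [httq]
            ring
          rw [hc2, this]
          linarith
        · have httq : tt = Real.sqrt (b (m + 1) * b (m + 2)) := by
            simp only [htt_def, ht_def]; rw [if_neg (by omega), if_neg hmk]
          have hmk' : m + 2 ≤ k := by omega
          have hb1 := hbpos (m + 1) hi1 (by omega)
          have hb2 := hbpos (m + 2) (by omega) hmk'
          have h4 := hb4 (m + 1) hi1 hmk'
          have hpows : (0 : ℝ) < tt ^ m := pow_pos htt m
          have haj1 := hpos (m + 1) (by omega)
          have haj2 := hpos (m + 2) (by omega)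
          -- c m < c (m+1) / 2
          have hgap1 : 2 * c m < c (m + 1) := by
            have hcoef : P.coeff m = b (m + 1) * P.coeff (m + 1) := by
              have := hb_eq (m + 1) (by omega) (by omega)
              simpa using this
            have h2b : 2 * b (m + 1) < tt := by
              rw [httq, Real.lt_sqrt (by linarith : (0:ℝ) ≤ 2 * b (m + 1))]
              nlinarith [mul_lt_mul_of_pos_left h4 hb1]
            simp only [hc_def, hcoef, pow_succ]
            nlinarith [mul_lt_mul_of_pos_right h2b (mul_pos haj1 hpows)]
          -- c (m+2) < c (m+1) / 2
          have hgap2 : 2 * c (m + 2) < c (m + 1) := by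
            have hcoef : P.coeff (m + 1) = b (m + 2) * P.coeff (m + 2) := by
              have := hb_eq (m + 2) (by omega) hmk'
              simpa using this
            have h2b : 2 * tt < b (m + 2) := by
              have : tt < b (m + 2) / 2 := by
                rw [httq, Real.sqrt_lt' (by linarith : (0:ℝ) < b (m + 2) / 2)]
                nlinarith [mul_lt_mul_of_pos_right h4 hb2]
              linarith
            have hpows1 : (0 : ℝ) < tt ^ (m + 1) := pow_pos htt (m + 1)
            simp only [hc_def, hcoef]
            rw [pow_succ tt (m + 1)]
            nlinarith [mul_lt_mul_of_pos_right h2b (mul_pos haj2 hpows1)]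
          linarith
      -- assemble
      have heval : P.eval (-tt) = ∑ j ∈ Finset.range (k + 1), (-1 : ℝ) ^ j * c j := by
        rw [Polynomial.eval_eq_sum_range, hdeg]
        refine Finset.sum_congr rfl fun j _ => ?_
        simp only [hc_def]
        rw [neg_pow]
        ring
      have hsplit : ∑ j ∈ Finset.range (k + 1), (-1 : ℝ) ^ j * c j
          = (∑ j ∈ Finset.range (m + 2), (-1 : ℝ) ^ j * c j)
            + ∑ j ∈ Finset.Ico (m + 2) (k + 1), (-1 : ℝ) ^ j * c j := by
        rw [Finset.range_eq_Ico, Finset.range_eq_Ico]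
        exact (Finset.sum_Ico_consecutive _ (Nat.zero_le _)
          (by omega : m + 2 ≤ k + 1)).symm
      rw [heval, hsplit, mul_add]
      linarith [hA, hB, hgap]
  -- extract k distinct negative real roots via IVT
  have hroot : ∀ i, ∃ x, i < k →
      x ∈ Set.Ioo (-(t (i + 1))) (-(t i)) ∧ P.eval x = 0 := by
    intro i
    by_cases hik : i < k
    · have h1 := hsign i (by omega)
      have h2 := hsign (i + 1) (by omega)
      have hlt : -(t (i + 1)) < -(t i) := neg_lt_neg (htlt i hik)
      have hprod : P.eval (-(t (i + 1))) * P.eval (-(t i)) < 0 := by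
        rcases Nat.even_or_odd i with he | ho
        · rw [he.neg_one_pow] at h1
          rw [(Even.add_one he).neg_one_pow] at h2
          nlinarith
        · rw [ho.neg_one_pow] at h1
          rw [(Odd.add_one ho).neg_one_pow] at h2
          nlinarith
      obtain ⟨z, hz, hz0⟩ := hutch_exists_root
        (Polynomial.continuous P) hlt hprod
      exact ⟨z, fun _ => ⟨hz, hz0⟩⟩
    · exact ⟨0, fun h => absurd h hik⟩
  choose r hr using hroot
  have hrneg : ∀ i, i < k → r i < 0 := by
    intro i hik
    have h := (hr i hik).1
    have := htnn i (by omega)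
    have := h.2
    linarith
  have hranti : ∀ i j, i < j → j < k → r j < r i := by
    intro i j hij hjk
    have h1 := (hr i (by omega)).1
    have h2 := (hr j hjk).1
    have hle : t (i + 1) ≤ t j := htle j (i + 1) (by omega) (by omega)
    have := h1.1
    have := h2.2
    linarith [neg_le_neg hle]
  -- complex root counting
  set Q : Polynomial ℂ := P.map (algebraMap ℝ ℂ) with hQ_def
  have hP0 : P ≠ 0 := by
    intro h
    rw [h] at hdeg
    simp at hdeg
    omega
  have hinj : Function.Injective (algebraMap ℝ ℂ) := (algebraMap ℝ ℂ).injective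
  have hQ0 : Q ≠ 0 := by
    simp only [hQ_def]
    exact (Polynomial.map_ne_zero_iff hinj).mpr hP0
  have hQdeg : Q.natDegree = k := by
    rw [hQ_def, Polynomial.natDegree_map_eq_of_injective hinj, hdeg]
  set Fc : Finset ℂ := (Finset.range k).image (fun i => ((r i : ℝ) : ℂ)) with hFc_def
  have hinjOn : Set.InjOn (fun i => ((r i : ℝ) : ℂ)) (Finset.range k) := by
    intro i hi j hj hij
    simp only [Finset.coe_range, Set.mem_Iio] at hi hj
    have hrij : r i = r j := by
      simp only at hij
      exact_mod_cast hij
    by_contra hne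
    rcases Nat.lt_or_ge i j with h | h
    · have := hranti i j h hj; linarith
    · have hji : j < i := by omega
      have := hranti j i hji hi; linarith
  have hFcard : Fc.card = k := by
    rw [hFc_def, Finset.card_image_of_injOn hinjOn, Finset.card_range]
  have hsub : Fc ⊆ Q.roots.toFinset := by
    intro z hz
    rw [hFc_def] at hz
    obtain ⟨i, hi, rfl⟩ := Finset.mem_image.mp hz
    rw [Finset.mem_range] at hi
    rw [Multiset.mem_toFinset, Polynomial.mem_roots hQ0]
    have hev : Q.eval ((r i : ℝ) : ℂ) = 0 := by
      have : ((r i : ℝ) : ℂ) = algebraMap ℝ ℂ (r i) := rfl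
      rw [hQ_def, this, Polynomial.eval_map, Polynomial.eval₂_at_apply,
        (hr i hi).2]
      simp
    exact hev
  have hcard_le : Q.roots.toFinset.card ≤ k := by
    calc Q.roots.toFinset.card ≤ Multiset.card Q.roots := Multiset.toFinset_card_le _
      _ ≤ Q.natDegree := Polynomial.card_roots' Q
      _ = k := hQdeg
  have heqF : Fc = Q.roots.toFinset :=
    Finset.eq_of_subset_of_card_le hsub (by rw [hFcard]; exact hcard_le)
  intro z hz
  have hzm : z ∈ Q.roots.toFinset := by
    rw [Multiset.mem_toFinset, Polynomial.mem_roots hQ0]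
    exact hz
  rw [← heqF, hFc_def] at hzm
  obtain ⟨i, hi, rfl⟩ := Finset.mem_image.mp hzm
  rw [Finset.mem_range] at hi
  constructor
  · simp
  · simpa using hrneg i hi
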